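/- arXiv:1701.06119 — 2 statements merged into one kernel-verified Lean document; each statement's English description precedes it below -/
import Mathlib

section
/- Let w_1, w_2 ∈ W(X,E) and let q_1, q_2 be strictly positive probability distributions on X. For n ≥ 1 and x^n = (x_1, …, x_n) ∈ X^n define q_i^(n)(x^n) = q_i(x_1) Π_{t=1}^{n−1} w_i(x_{t+1}|x_t) for i = 1, 2, and let D(q_1^(n) | q_2^(n)) = Σ_{x^n : (x_t,x_{t+1})∈E for all t} q_1^(n)(x^n) log( q_1^(n)(x^n) / q_2^(n)(x^n) ). Then (1/n) D(q_1^(n) | q_2^(n)) converges as n → ∞ to Σ_{(x,y)∈E} p_{w_1}(x) w_1(y|x) log( w_1(y|x) / w_2(y|x) ). -/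
open scoped BigOperators

/-- The directed graph `(X, E)` is strongly connected: any vertex can be reached
from any other by a path of length at least one along edges in `E`. -/
def StronglyConnected {X : Type*} (E : Finset (X × X)) : Prop :=
  ∀ x y : X, Relation.TransGen (fun a b => (a, b) ∈ E) x y

/-- `w` is a Markov kernel on `(X, E)` (an element of `W(X,E)`):
`w x y` denotes `w(y|x)`, is nonnegative, sums to one over `y`,
and is positive exactly on the edge set `E`. -/
def IsMarkovKernel {X : Type*} [Fintype X] (E : Finset (X × X)) (w : X → X → ℝ) : Prop :=
  (∀ x y, 0 ≤ w x y) ∧ (∀ x, ∑ y, w x y = 1) ∧ (∀ x y, (0 < w x y ↔ (x, y) ∈ E))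


/-- `p` is the (positive) stationary distribution of the Markov kernel `w`. -/
def IsStationaryDistrib {X : Type*} [Fintype X] (w : X → X → ℝ) (p : X → ℝ) : Prop :=
  (∀ x, 0 < p x) ∧ (∑ x, p x = 1) ∧ (∀ y, ∑ x, p x * w x y = p y)

namespace DivRate

open Finset

variable {X : Type*} [Fintype X] [DecidableEq X]

/-- distribution after `n` steps -/
def mu (w : X → X → ℝ) (q : X → ℝ) : ℕ → X → ℝ
  | 0 => q
  | n + 1 => fun y => ∑ x, mu w q n x * w x y

/-- probability of a path -/
def pathP (w : X → X → ℝ) (q : X → ℝ) (n : ℕ) (xs : Fin (n + 1) → X) : ℝ :=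
  q (xs 0) * ∏ t : Fin n, w (xs t.castSucc) (xs t.succ)

lemma snoc_zero' (ys : Fin (n + 1) → X) (z : X) :
    (Fin.snoc ys z : Fin (n + 2) → X) 0 = ys 0 := by
  rw [show (0 : Fin (n + 2)) = Fin.castSucc 0 from rfl, Fin.snoc_castSucc]

lemma pathP_snoc (w : X → X → ℝ) (q : X → ℝ) (n : ℕ) (ys : Fin (n + 1) → X) (z : X) :
    pathP w q (n + 1) (Fin.snoc ys z) = pathP w q n ys * w (ys (Fin.last n)) z := by
  simp only [pathP, Fin.prod_univ_castSucc, snoc_zero']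
  have h1 : ∀ t : Fin n,
      w ((Fin.snoc ys z : Fin (n+2) → X) t.castSucc.castSucc)
        ((Fin.snoc ys z : Fin (n+2) → X) t.castSucc.succ)
      = w (ys t.castSucc) (ys t.succ) := by
    intro t
    rw [Fin.snoc_castSucc, Fin.succ_castSucc, Fin.snoc_castSucc]
  have h2 : ((Fin.snoc ys z : Fin (n+2) → X) (Fin.last n).castSucc) = ys (Fin.last n) :=
    Fin.snoc_castSucc _ _ _
  have h3 : ((Fin.snoc ys z : Fin (n+2) → X) (Fin.last n).succ) = z := by
    rw [Fin.succ_last, Fin.snoc_last]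
  rw [Finset.prod_congr rfl fun t _ => h1 t, h2, h3]
  ring

lemma stepsum_snoc (L : X → X → ℝ) (n : ℕ) (ys : Fin (n + 1) → X) (z : X) :
    (∑ t : Fin (n + 1), L ((Fin.snoc ys z : Fin (n+2) → X) t.castSucc)
        ((Fin.snoc ys z : Fin (n+2) → X) t.succ))
    = (∑ t : Fin n, L (ys t.castSucc) (ys t.succ)) + L (ys (Fin.last n)) z := by
  rw [Fin.sum_univ_castSucc]
  congr 1
  · refine Finset.sum_congr rfl fun t _ => ?_
    rw [Fin.snoc_castSucc, Fin.succ_castSucc, Fin.snoc_castSucc]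
  · rw [Fin.snoc_castSucc, Fin.succ_last, Fin.snoc_last]

lemma sum_snoc (n : ℕ) (f : (Fin (n + 2) → X) → ℝ) :
    ∑ xs : Fin (n + 2) → X, f xs
      = ∑ ys : Fin (n + 1) → X, ∑ z : X, f (Fin.snoc ys z) := by
  rw [← Equiv.sum_comp (Fin.snocEquiv (fun _ : Fin (n+2) => X)) f]
  rw [Fintype.sum_prod_type]
  rw [Finset.sum_comm]
  rfl

lemma sum_fin_one (F : X → ℝ) : ∑ ys : Fin 1 → X, F (ys 0) = ∑ x : X, F x :=
  Equiv.sum_comp (Equiv.funUnique (Fin 1) X) F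

lemma firstSum (w : X → X → ℝ) (hw : ∀ x, ∑ y, w x y = 1) (q : X → ℝ) (g : X → ℝ) :
    ∀ n : ℕ, ∑ ys : Fin (n + 1) → X, pathP w q n ys * g (ys 0) = ∑ x, q x * g x := by
  intro n
  induction n with
  | zero =>
      simpa [pathP] using sum_fin_one (fun x => q x * g x)
  | succ n ih =>
      rw [sum_snoc]
      calc ∑ ys : Fin (n + 1) → X, ∑ z : X,
            pathP w q (n+1) (Fin.snoc ys z) * g ((Fin.snoc ys z : Fin (n+2) → X) 0)
          = ∑ ys : Fin (n + 1) → X, pathP w q n ys * g (ys 0) := by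
            refine Finset.sum_congr rfl fun ys _ => ?_
            simp only [pathP_snoc, snoc_zero']
            rw [← Finset.sum_mul, ← Finset.mul_sum, hw (ys (Fin.last n)), mul_one]
        _ = ∑ x, q x * g x := ih

lemma endSum (w : X → X → ℝ) (q : X → ℝ) (n : ℕ) (g : X → ℝ) :
    ∑ ys : Fin (n + 1) → X, pathP w q n ys * g (ys (Fin.last n)) = ∑ x, mu w q n x * g x := by
  induction n generalizing g with
  | zero =>
      simpa [pathP, mu] using sum_fin_one (fun x => q x * g x)
  | succ n ih =>
      rw [sum_snoc]
      calc ∑ ys : Fin (n + 1) → X, ∑ z : X,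
            pathP w q (n+1) (Fin.snoc ys z) * g ((Fin.snoc ys z : Fin (n+2) → X) (Fin.last (n+1)))
          = ∑ ys : Fin (n + 1) → X, pathP w q n ys * (∑ z, w (ys (Fin.last n)) z * g z) := by
            refine Finset.sum_congr rfl fun ys _ => ?_
            rw [Finset.mul_sum]
            refine Finset.sum_congr rfl fun z _ => ?_
            rw [pathP_snoc, Fin.snoc_last]
            ring
        _ = ∑ x, mu w q n x * ∑ z, w x z * g z := ih (fun u => ∑ z, w u z * g z)
        _ = ∑ x, ∑ z, mu w q n x * w x z * g z := by
            refine Finset.sum_congr rfl fun x _ => ?_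
            rw [Finset.mul_sum]
            exact Finset.sum_congr rfl fun z _ => by ring
        _ = ∑ z, ∑ x, mu w q n x * w x z * g z := Finset.sum_comm
        _ = ∑ z, mu w q (n+1) z * g z := by
            refine Finset.sum_congr rfl fun z _ => ?_
            simp only [mu, Finset.sum_mul]

lemma stepSum (w : X → X → ℝ) (hw : ∀ x, ∑ y, w x y = 1) (q : X → ℝ) (L : X → X → ℝ) :
    ∀ n : ℕ, ∑ ys : Fin (n + 1) → X,
        pathP w q n ys * (∑ t : Fin n, L (ys t.castSucc) (ys t.succ))
      = ∑ t ∈ Finset.range n, ∑ x, mu w q t x * (∑ z, w x z * L x z) := by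
  intro n
  induction n with
  | zero => simp
  | succ n ih =>
      rw [sum_snoc, Finset.sum_range_succ, ← ih, ← endSum w q n (fun x => ∑ z, w x z * L x z)]
      rw [← Finset.sum_add_distrib]
      refine Finset.sum_congr rfl fun ys _ => ?_
      calc ∑ z : X, pathP w q (n+1) (Fin.snoc ys z) *
            (∑ t : Fin (n+1), L ((Fin.snoc ys z : Fin (n+2) → X) t.castSucc)
              ((Fin.snoc ys z : Fin (n+2) → X) t.succ))
          = ∑ z : X, pathP w q n ys * w (ys (Fin.last n)) z *
              ((∑ t : Fin n, L (ys t.castSucc) (ys t.succ)) + L (ys (Fin.last n)) z) := by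
            refine Finset.sum_congr rfl fun z _ => by rw [pathP_snoc, stepsum_snoc]
        _ = ∑ z : X, (pathP w q n ys * (∑ t : Fin n, L (ys t.castSucc) (ys t.succ)) * w (ys (Fin.last n)) z
            + pathP w q n ys * (w (ys (Fin.last n)) z * L (ys (Fin.last n)) z)) :=
            Finset.sum_congr rfl fun z _ => by ring
        _ = (∑ z : X, pathP w q n ys * (∑ t : Fin n, L (ys t.castSucc) (ys t.succ)) * w (ys (Fin.last n)) z)
            + ∑ z : X, pathP w q n ys * (w (ys (Fin.last n)) z * L (ys (Fin.last n)) z) :=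
            Finset.sum_add_distrib
        _ = pathP w q n ys * (∑ t : Fin n, L (ys t.castSucc) (ys t.succ)) * (∑ z, w (ys (Fin.last n)) z)
            + pathP w q n ys * (∑ z, w (ys (Fin.last n)) z * L (ys (Fin.last n)) z) := by
            rw [← Finset.mul_sum, ← Finset.mul_sum]
        _ = _ := by rw [hw, mul_one]

lemma mu_nonneg (w : X → X → ℝ) (hw : ∀ x y, 0 ≤ w x y) (q : X → ℝ) (hq : ∀ x, 0 ≤ q x) :
    ∀ n x, 0 ≤ mu w q n x := by
  intro n
  induction n with
  | zero => exact hq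
  | succ n ih => exact fun y => Finset.sum_nonneg fun x _ => mul_nonneg (ih x) (hw x y)

lemma mu_sum_one (w : X → X → ℝ) (hw : ∀ x, ∑ y, w x y = 1) (q : X → ℝ) (hq : ∑ x, q x = 1) :
    ∀ n, ∑ x, mu w q n x = 1 := by
  intro n
  induction n with
  | zero => exact hq
  | succ n ih =>
      calc ∑ y, mu w q (n+1) y = ∑ y, ∑ x, mu w q n x * w x y := rfl
        _ = ∑ x, ∑ y, mu w q n x * w x y := Finset.sum_comm
        _ = ∑ x, mu w q n x * ∑ y, w x y := by
            exact Finset.sum_congr rfl fun x _ => (Finset.mul_sum _ _ _).symm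
        _ = 1 := by simp only [hw, mul_one, ih]

lemma mu_le_one (w : X → X → ℝ) (hw0 : ∀ x y, 0 ≤ w x y) (hw : ∀ x, ∑ y, w x y = 1)
    (q : X → ℝ) (hq0 : ∀ x, 0 ≤ q x) (hq : ∑ x, q x = 1) (n : ℕ) (x : X) :
    mu w q n x ≤ 1 := by
  rw [← mu_sum_one w hw q hq n]
  exact Finset.single_le_sum (fun y _ => mu_nonneg w hw0 q hq0 n y) (Finset.mem_univ x)

lemma stationary_unique [Nonempty X]
    (E : Finset (X × X)) (hconn : StronglyConnected E)
    (w : X → X → ℝ) (hw : IsMarkovKernel E w)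
    (p : X → ℝ) (hp : IsStationaryDistrib w p)
    (v : X → ℝ) (hv0 : ∀ x, 0 ≤ v x) (hvs : ∑ x, v x = 1)
    (hstat : ∀ y, ∑ x, v x * w x y = v y) : v = p := by
  obtain ⟨x₀, -, hx₀⟩ := Finset.exists_min_image Finset.univ (fun x => v x / p x)
    ⟨Classical.arbitrary X, Finset.mem_univ _⟩
  set c := v x₀ / p x₀ with hc
  set h : X → ℝ := fun x => v x - c * p x with hh
  have hh0 : ∀ x, 0 ≤ h x := by
    intro x
    have hcx : c ≤ v x / p x := hx₀ x (Finset.mem_univ x)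
    have := (le_div_iff₀ (hp.1 x)).mp hcx
    simp only [hh]
    linarith
  have hstat_h : ∀ y, ∑ x, h x * w x y = h y := by
    intro y
    simp only [hh]
    have : ∀ x, (v x - c * p x) * w x y = v x * w x y - c * (p x * w x y) := fun x => by ring
    rw [Finset.sum_congr rfl fun x _ => this x, Finset.sum_sub_distrib, ← Finset.mul_sum,
      hstat y, hp.2.2 y]
  have hx₀0 : h x₀ = 0 := by
    simp only [hh, hc]
    rw [div_mul_cancel₀ _ (ne_of_gt (hp.1 x₀))]
    ring
  have key : ∀ a b : X, (a, b) ∈ E → h b = 0 → h a = 0 := by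
    intro a b hab hb
    have hsum : ∑ x, h x * w x b = 0 := by rw [hstat_h b, hb]
    have hterm := (Finset.sum_eq_zero_iff_of_nonneg
      (fun x _ => mul_nonneg (hh0 x) (hw.1 x b))).mp hsum a (Finset.mem_univ a)
    have hwab : 0 < w a b := (hw.2.2 a b).mpr hab
    rcases mul_eq_zero.mp hterm with h' | h'
    · exact h'
    · exact absurd h' (ne_of_gt hwab)
  have hz : ∀ y, h y = 0 := by
    intro y
    refine Relation.TransGen.head_induction_on (hconn y x₀) ?_ ?_
    · intro a hab
      exact key a x₀ hab hx₀0
    · intro a b hab _ hb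
      exact key a b hab hb
  have hc1 : c = 1 := by
    have : ∑ x, v x = ∑ x, c * p x :=
      Finset.sum_congr rfl fun x _ => by have := hz x; simp only [hh] at this; linarith
    rw [hvs, ← Finset.mul_sum, hp.2.1, mul_one] at this
    exact this.symm
  funext x
  have := hz x
  simp only [hh, hc1] at this
  linarith

lemma cesaro [Nonempty X]
    (E : Finset (X × X)) (hconn : StronglyConnected E)
    (w : X → X → ℝ) (hw : IsMarkovKernel E w)
    (q : X → ℝ) (hq0 : ∀ x, 0 ≤ q x) (hqs : ∑ x, q x = 1)
    (p : X → ℝ) (hp : IsStationaryDistrib w p) :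
    Filter.Tendsto (fun n : ℕ => fun x =>
      (∑ t ∈ Finset.range (n + 1), mu w q t x) / ((n : ℝ) + 1)) Filter.atTop (nhds p) := by
  have hmu0 := mu_nonneg w hw.1 q hq0
  have hmus := mu_sum_one w hw.2.1 q hqs
  have hmu1 := mu_le_one w hw.1 hw.2.1 q hq0 hqs
  set Abar : ℕ → X → ℝ := fun n x =>
    (∑ t ∈ Finset.range (n + 1), mu w q t x) / ((n : ℝ) + 1) with hAbar
  set K : Set (X → ℝ) := {v | (∀ x, 0 ≤ v x) ∧ ∑ x, v x = 1} with hK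
  have hKc : IsClosed K := by
    have : K = (⋂ x : X, {v : X → ℝ | 0 ≤ v x}) ∩ {v : X → ℝ | ∑ x, v x = 1} := by
      ext u; simp [hK, Set.mem_iInter]
    rw [this]
    exact (isClosed_iInter fun x => isClosed_le continuous_const (continuous_apply x)).inter
      (isClosed_eq (continuous_finset_sum _ fun x _ => continuous_apply x) continuous_const)
  have hKb : Bornology.IsBounded K := by
    refine (Metric.isBounded_closedBall (x := (0 : X → ℝ)) (r := 1)).subset fun u hu => ?_
    rw [Metric.mem_closedBall, dist_zero_right]
    refine (pi_norm_le_iff_of_nonneg (by norm_num)).mpr fun x => ?_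
    rw [Real.norm_eq_abs, abs_of_nonneg (hu.1 x)]
    calc u x ≤ ∑ y, u y := Finset.single_le_sum (fun y _ => hu.1 y) (Finset.mem_univ x)
      _ = 1 := hu.2
  have hKcompact : IsCompact K := Metric.isCompact_of_isClosed_isBounded hKc hKb
  have hmem : ∀ n, Abar n ∈ K := by
    intro n
    constructor
    · intro x
      exact div_nonneg (Finset.sum_nonneg fun t _ => hmu0 t x) (by positivity)
    · simp only [hAbar]
      rw [← Finset.sum_div, Finset.sum_comm]
      have : ∀ t ∈ Finset.range (n + 1), ∑ x, mu w q t x = 1 := fun t _ => hmus t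
      rw [Finset.sum_congr rfl this, Finset.sum_const, Finset.card_range]
      simp only [nsmul_eq_mul, mul_one]
      push_cast
      rw [div_self (by positivity)]
  have hdiff : ∀ (n : ℕ) (y : X), ∑ x, Abar n x * w x y - Abar n y
      = (mu w q (n + 1) y - mu w q 0 y) / ((n : ℝ) + 1) := by
    intro n y
    have h1 : ∑ x, Abar n x * w x y
        = (∑ t ∈ Finset.range (n + 1), mu w q (t + 1) y) / ((n : ℝ) + 1) := by
      simp only [hAbar]
      calc ∑ x, (∑ t ∈ Finset.range (n + 1), mu w q t x) / ((n : ℝ) + 1) * w x y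
          = ∑ x, (∑ t ∈ Finset.range (n + 1), mu w q t x * w x y) / ((n : ℝ) + 1) :=
            Finset.sum_congr rfl fun x _ => by rw [div_mul_eq_mul_div, Finset.sum_mul]
        _ = (∑ x, ∑ t ∈ Finset.range (n + 1), mu w q t x * w x y) / ((n : ℝ) + 1) :=
            (Finset.sum_div ..).symm
        _ = (∑ t ∈ Finset.range (n + 1), ∑ x, mu w q t x * w x y) / ((n : ℝ) + 1) := by
            rw [Finset.sum_comm]
        _ = (∑ t ∈ Finset.range (n + 1), mu w q (t + 1) y) / ((n : ℝ) + 1) := rfl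
    have h2 : ∑ t ∈ Finset.range (n + 1), mu w q (t + 1) y
        = ∑ t ∈ Finset.range (n + 1), mu w q t y + mu w q (n + 1) y - mu w q 0 y := by
      have ha := Finset.sum_range_succ' (fun t => mu w q t y) (n + 1)
      have hb := Finset.sum_range_succ (fun t => mu w q t y) (n + 1)
      rw [hb] at ha
      linarith
    rw [h1, h2]
    simp only [hAbar]
    ring
  refine Filter.tendsto_of_subseq_tendsto fun ns hns => ?_
  obtain ⟨v, hvK, φ, hφ, hconv⟩ := hKcompact.tendsto_subseq (x := fun k => Abar (ns k)) fun k => hmem _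
  have hm : Filter.Tendsto (fun k => ns (φ k)) Filter.atTop Filter.atTop := hns.comp hφ.tendsto_atTop
  have hcoord : ∀ x, Filter.Tendsto (fun k => Abar (ns (φ k)) x) Filter.atTop (nhds (v x)) :=
    fun x => tendsto_pi_nhds.mp hconv x
  have hv_stat : ∀ y, ∑ x, v x * w x y = v y := by
    intro y
    have h1 : Filter.Tendsto (fun k => ∑ x, Abar (ns (φ k)) x * w x y) Filter.atTop
        (nhds (∑ x, v x * w x y)) :=
      tendsto_finset_sum _ fun x _ => (hcoord x).mul_const _
    have h2 := hcoord y
    have h3 : Filter.Tendsto (fun k => ∑ x, Abar (ns (φ k)) x * w x y - Abar (ns (φ k)) y)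
        Filter.atTop (nhds 0) := by
      apply squeeze_zero_norm (a := fun k => 2 / ((ns (φ k) : ℝ) + 1))
      · intro k
        rw [hdiff (ns (φ k)) y, Real.norm_eq_abs, abs_div,
          abs_of_nonneg (by positivity : (0:ℝ) ≤ (ns (φ k) : ℝ) + 1)]
        have hnum : |mu w q (ns (φ k) + 1) y - mu w q 0 y| ≤ 2 := by
          have ha := hmu1 (ns (φ k) + 1) y
          have hb := hmu0 (ns (φ k) + 1) y
          have hcc := hmu1 0 y
          have hd := hmu0 0 y
          rw [abs_le]
          constructor <;> linarith
        gcongr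
      · have hb : Filter.Tendsto (fun n : ℕ => 2 / ((n : ℝ) + 1)) Filter.atTop (nhds 0) := by
          have h := tendsto_one_div_add_atTop_nhds_zero_nat.const_mul (2:ℝ)
          rw [mul_zero] at h
          refine h.congr fun n => ?_
          rw [mul_one_div]
        exact hb.comp hm
    have h4 := tendsto_nhds_unique (h1.sub h2) h3
    linarith
  have hvp : v = p := stationary_unique E hconn w hw p hp v hvK.1 hvK.2 hv_stat
  exact ⟨φ, hvp ▸ hconv⟩

lemma cesaro_pt [Nonempty X]
    (E : Finset (X × X)) (hconn : StronglyConnected E)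
    (w : X → X → ℝ) (hw : IsMarkovKernel E w)
    (q : X → ℝ) (hq0 : ∀ x, 0 ≤ q x) (hqs : ∑ x, q x = 1)
    (p : X → ℝ) (hp : IsStationaryDistrib w p) (x : X) :
    Filter.Tendsto (fun n : ℕ => (∑ t ∈ Finset.range n, mu w q t x) / ((n : ℝ) + 1))
      Filter.atTop (nhds (p x)) := by
  have h := tendsto_pi_nhds.mp (cesaro E hconn w hw q hq0 hqs p hp) x
  have hz : Filter.Tendsto (fun m : ℕ => 1 / ((m : ℝ) + 2)) Filter.atTop (nhds 0) := by
    have h1 := (Filter.tendsto_add_atTop_iff_nat 1).mpr (tendsto_one_div_add_atTop_nhds_zero_nat (𝕜 := ℝ))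
    refine h1.congr fun m => ?_
    push_cast
    ring
  have hr : Filter.Tendsto (fun m : ℕ => ((m : ℝ) + 1) / ((m : ℝ) + 2))
      Filter.atTop (nhds 1) := by
    have h1 := (tendsto_const_nhds (x := (1:ℝ)) (f := Filter.atTop (α := ℕ))).sub hz
    rw [sub_zero] at h1
    refine h1.congr fun m => ?_
    have hm2 : ((m:ℝ) + 2) ≠ 0 := by positivity
    field_simp
    ring
  have h2 : Filter.Tendsto (fun m : ℕ =>
      (∑ t ∈ Finset.range (m + 1), mu w q t x) / ((m : ℝ) + 1) * (((m : ℝ) + 1) / ((m : ℝ) + 2)))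
      Filter.atTop (nhds (p x)) := by
    have := h.mul hr
    rwa [mul_one] at this
  rw [← Filter.tendsto_add_atTop_iff_nat 1]
  refine h2.congr fun m => ?_
  have hm1 : ((m:ℝ) + 1) ≠ 0 := by positivity
  have hm2 : ((m:ℝ) + 2) ≠ 0 := by positivity
  push_cast
  rw [div_mul_div_comm, div_eq_div_iff (by positivity) (by positivity)]
  ring

lemma term_eq (E : Finset (X × X)) (w₁ w₂ : X → X → ℝ)
    (hw₁ : IsMarkovKernel E w₁) (hw₂ : IsMarkovKernel E w₂)
    (q₁ q₂ : X → ℝ) (hq₁ : ∀ x, 0 < q₁ x) (hq₂ : ∀ x, 0 < q₂ x)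
    (n : ℕ) (xs : Fin (n + 1) → X) :
    (if ∀ t : Fin n, (xs t.castSucc, xs t.succ) ∈ E then
        (q₁ (xs 0) * ∏ t : Fin n, w₁ (xs t.castSucc) (xs t.succ)) *
          Real.log ((q₁ (xs 0) * ∏ t : Fin n, w₁ (xs t.castSucc) (xs t.succ)) /
            (q₂ (xs 0) * ∏ t : Fin n, w₂ (xs t.castSucc) (xs t.succ)))
      else 0)
    = pathP w₁ q₁ n xs * (Real.log (q₁ (xs 0) / q₂ (xs 0))
        + ∑ t : Fin n, Real.log (w₁ (xs t.castSucc) (xs t.succ) / w₂ (xs t.castSucc) (xs t.succ))) := by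
  by_cases hc : ∀ t : Fin n, (xs t.castSucc, xs t.succ) ∈ E
  · rw [if_pos hc]
    have hw1pos : ∀ t : Fin n, 0 < w₁ (xs t.castSucc) (xs t.succ) :=
      fun t => (hw₁.2.2 _ _).mpr (hc t)
    have hw2pos : ∀ t : Fin n, 0 < w₂ (xs t.castSucc) (xs t.succ) :=
      fun t => (hw₂.2.2 _ _).mpr (hc t)
    have key : (q₁ (xs 0) * ∏ t : Fin n, w₁ (xs t.castSucc) (xs t.succ)) /
          (q₂ (xs 0) * ∏ t : Fin n, w₂ (xs t.castSucc) (xs t.succ))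
        = (q₁ (xs 0) / q₂ (xs 0)) *
            ∏ t : Fin n, (w₁ (xs t.castSucc) (xs t.succ) / w₂ (xs t.castSucc) (xs t.succ)) := by
      rw [mul_div_mul_comm, Finset.prod_div_distrib]
    rw [key, Real.log_mul (ne_of_gt (div_pos (hq₁ _) (hq₂ _)))
        (ne_of_gt (Finset.prod_pos fun t _ => div_pos (hw1pos t) (hw2pos t))),
      Real.log_prod fun t _ => ne_of_gt (div_pos (hw1pos t) (hw2pos t))]
    rfl
  · rw [if_neg hc]
    push_neg at hc
    obtain ⟨t, ht⟩ := hc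
    have h0 : w₁ (xs t.castSucc) (xs t.succ) = 0 := by
      rcases (hw₁.1 (xs t.castSucc) (xs t.succ)).eq_or_lt with h | h
      · exact h.symm
      · exact absurd ((hw₁.2.2 _ _).mp h) ht
    have hp0 : pathP w₁ q₁ n xs = 0 := by
      simp only [pathP]
      rw [Finset.prod_eq_zero (Finset.mem_univ t) h0, mul_zero]
    rw [hp0, zero_mul]

end DivRate

/-- divergence rate. Let `w₁, w₂ ∈ W(X,E)`, let `q₁, q₂` be
strictly positive initial distributions on `X`, and let `p₁` be the stationary
distribution of `w₁`.  With `q_i⁽ⁿ⁾(x₁,…,xₙ) = q_i(x₁) Π_t w_i(x_{t+1}|x_t)`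
(here a path with `n+1` points is indexed by `Fin (n+1) → X`) and
`D(q₁⁽ⁿ⁾|q₂⁽ⁿ⁾)` the Kullback–Leibler divergence summed over paths along `E`,
the normalized divergences `(1/n) D(q₁⁽ⁿ⁾|q₂⁽ⁿ⁾)` converge to the divergence rate
`Σ_{(x,y)∈E} p₁(x) w₁(y|x) log(w₁(y|x)/w₂(y|x))`. -/
theorem divergence_rate_limit
    {X : Type*} [Fintype X] [DecidableEq X] (hX : 2 ≤ Fintype.card X)
    (E : Finset (X × X)) (hconn : StronglyConnected E)
    (w₁ w₂ : X → X → ℝ) (hw₁ : IsMarkovKernel E w₁) (hw₂ : IsMarkovKernel E w₂)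
    (q₁ q₂ : X → ℝ) (hq₁ : ∀ x, 0 < q₁ x) (hq₁s : ∑ x, q₁ x = 1)
    (hq₂ : ∀ x, 0 < q₂ x) (hq₂s : ∑ x, q₂ x = 1)
    (p₁ : X → ℝ) (hp₁ : IsStationaryDistrib w₁ p₁) :
    Filter.Tendsto (fun n : ℕ =>
      (∑ xs : Fin (n + 1) → X,
        if ∀ t : Fin n, (xs t.castSucc, xs t.succ) ∈ E then
          (q₁ (xs 0) * ∏ t : Fin n, w₁ (xs t.castSucc) (xs t.succ)) *
            Real.log ((q₁ (xs 0) * ∏ t : Fin n, w₁ (xs t.castSucc) (xs t.succ)) /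
              (q₂ (xs 0) * ∏ t : Fin n, w₂ (xs t.castSucc) (xs t.succ)))
        else 0) / (n + 1 : ℝ))
      Filter.atTop
      (nhds (∑ e ∈ E, p₁ e.1 * w₁ e.1 e.2 * Real.log (w₁ e.1 e.2 / w₂ e.1 e.2))) := by
  have hne : Nonempty X := Fintype.card_pos_iff.mp (by omega)
  have hclosed : ∀ n : ℕ,
      (∑ xs : Fin (n + 1) → X,
        if ∀ t : Fin n, (xs t.castSucc, xs t.succ) ∈ E then
          (q₁ (xs 0) * ∏ t : Fin n, w₁ (xs t.castSucc) (xs t.succ)) *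
            Real.log ((q₁ (xs 0) * ∏ t : Fin n, w₁ (xs t.castSucc) (xs t.succ)) /
              (q₂ (xs 0) * ∏ t : Fin n, w₂ (xs t.castSucc) (xs t.succ)))
        else 0)
      = (∑ x, q₁ x * Real.log (q₁ x / q₂ x))
        + ∑ t ∈ Finset.range n, ∑ x, DivRate.mu w₁ q₁ t x *
            (∑ z, w₁ x z * Real.log (w₁ x z / w₂ x z)) := by
    intro n
    rw [Finset.sum_congr rfl fun xs _ => DivRate.term_eq E w₁ w₂ hw₁ hw₂ q₁ q₂ hq₁ hq₂ n xs]
    rw [Finset.sum_congr rfl fun xs _ => mul_add (DivRate.pathP w₁ q₁ n xs) _ _]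
    rw [Finset.sum_add_distrib]
    rw [DivRate.firstSum w₁ hw₁.2.1 q₁ (fun x => Real.log (q₁ x / q₂ x)) n,
      DivRate.stepSum w₁ hw₁.2.1 q₁ (fun x y => Real.log (w₁ x y / w₂ x y)) n]
  have hlimit : (∑ e ∈ E, p₁ e.1 * w₁ e.1 e.2 * Real.log (w₁ e.1 e.2 / w₂ e.1 e.2))
      = ∑ x, p₁ x * (∑ z, w₁ x z * Real.log (w₁ x z / w₂ x z)) := by
    calc ∑ e ∈ E, p₁ e.1 * w₁ e.1 e.2 * Real.log (w₁ e.1 e.2 / w₂ e.1 e.2)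
        = ∑ e : X × X, p₁ e.1 * w₁ e.1 e.2 * Real.log (w₁ e.1 e.2 / w₂ e.1 e.2) := by
          refine Finset.sum_subset (Finset.subset_univ E) fun e _ he => ?_
          have h0 : w₁ e.1 e.2 = 0 := by
            rcases (hw₁.1 e.1 e.2).eq_or_lt with h | h
            · exact h.symm
            · exact absurd ((hw₁.2.2 _ _).mp h) he
          rw [h0]
          ring
      _ = ∑ x, ∑ z, p₁ x * w₁ x z * Real.log (w₁ x z / w₂ x z) := by
          rw [Fintype.sum_prod_type]
      _ = ∑ x, p₁ x * ∑ z, w₁ x z * Real.log (w₁ x z / w₂ x z) := by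
          refine Finset.sum_congr rfl fun x _ => ?_
          rw [Finset.mul_sum]
          exact Finset.sum_congr rfl fun z _ => by ring
  rw [hlimit]
  have hces := DivRate.cesaro_pt E hconn w₁ hw₁ q₁ (fun x => (hq₁ x).le) hq₁s p₁ hp₁
  have hC : Filter.Tendsto (fun n : ℕ =>
      (∑ x, q₁ x * Real.log (q₁ x / q₂ x)) * (1 / ((n:ℝ) + 1))) Filter.atTop (nhds 0) := by
    have h := tendsto_one_div_add_atTop_nhds_zero_nat.const_mul
      (∑ x, q₁ x * Real.log (q₁ x / q₂ x))
    rwa [mul_zero] at h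
  have hsum : Filter.Tendsto (fun n : ℕ =>
      ∑ x, ((∑ t ∈ Finset.range n, DivRate.mu w₁ q₁ t x) / ((n:ℝ) + 1)) *
        (∑ z, w₁ x z * Real.log (w₁ x z / w₂ x z))) Filter.atTop
      (nhds (∑ x, p₁ x * ∑ z, w₁ x z * Real.log (w₁ x z / w₂ x z))) :=
    tendsto_finset_sum _ fun x _ => (hces x).mul_const _
  have hfinal := hC.add hsum
  rw [zero_add] at hfinal
  refine hfinal.congr fun n => ?_
  rw [hclosed n]
  have hswap : (∑ t ∈ Finset.range n, ∑ x, DivRate.mu w₁ q₁ t x *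
        (∑ z, w₁ x z * Real.log (w₁ x z / w₂ x z)))
      = ∑ x, (∑ t ∈ Finset.range n, DivRate.mu w₁ q₁ t x) *
        (∑ z, w₁ x z * Real.log (w₁ x z / w₂ x z)) := by
    rw [Finset.sum_comm]
    exact Finset.sum_congr rfl fun x _ => (Finset.sum_mul ..).symm
  rw [hswap, add_div, mul_one_div]
  congr 1
  rw [Finset.sum_div]
  exact Finset.sum_congr rfl fun x _ => div_mul_eq_mul_div _ _ _
end

section
/- Let Θ ⊆ ℝ^d be open, let {w_θ : θ ∈ Θ} ⊆ W(X,E) with w_θ(y|x) continuously differentiable in θ for each (x,y) ∈ E, and let {q_θ : θ ∈ Θ} be strictly positive probability distributions on X with q_θ(x) continuously differentiable in θ. For n ≥ 1 define the joint distribution q_θ^(n)(x^n) = q_θ(x_1) Π_{t=1}^{n−1} w_θ(x_{t+1}|x_t) on paths x^n = (x_1,…,x_n) with (x_t,x_{t+1}) ∈ E for all t, and let g_ij^(n)(θ) = Σ_{x^n} q_θ^(n)(x^n) (∂_i log q_θ^(n)(x^n))(∂_j log q_θ^(n)(x^n)). Then for every θ ∈ Θ and all i, j, (1/n) g_ij^(n)(θ)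 converges as n → ∞ to g_ij(θ) := Σ_{(x,y)∈E} p_{w_θ}(x) w_θ(y|x) (∂_i log w_θ(y|x))(∂_j log w_θ(y|x)). -/
open scoped BigOperators
open Filter

/-- `p` is the (positive) stationary distribution of the Markov kernel `w`. -/
def IsStationaryDist {X : Type*} [Fintype X] (w : X → X → ℝ) (p : X → ℝ) : Prop :=
  (∀ x, 0 < p x) ∧ (∑ x, p x = 1) ∧ (∀ y, ∑ x, p x * w x y = p y)

/-- The partial derivative `∂f/∂θⁱ` of a function `f : ℝ^d → ℝ` at `θ`. -/
noncomputable def pd {d : ℕ} (f : (Fin d → ℝ) → ℝ) (i : Fin d) (θ : Fin d → ℝ) : ℝ :=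
  fderiv ℝ f θ (Pi.single i 1)

/-! ### Auxiliary lemmas about `pd` -/

lemma pd_congr {d : ℕ} {f g : (Fin d → ℝ) → ℝ} {i : Fin d} {θ : Fin d → ℝ}
    (h : f =ᶠ[nhds θ] g) : pd f i θ = pd g i θ := by
  unfold pd; rw [h.fderiv_eq]

lemma pd_const {d : ℕ} (c : ℝ) (i : Fin d) (θ : Fin d → ℝ) :
    pd (fun _ => c) i θ = 0 := by
  unfold pd; rw [fderiv_fun_const]; simp

lemma pd_sum {d : ℕ} {ι : Type*} (s : Finset ι) (f : ι → (Fin d → ℝ) → ℝ) (i : Fin d)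
    (θ : Fin d → ℝ) (hf : ∀ a ∈ s, DifferentiableAt ℝ (f a) θ) :
    pd (fun θ' => ∑ a ∈ s, f a θ') i θ = ∑ a ∈ s, pd (f a) i θ := by
  unfold pd
  rw [fderiv_fun_sum hf]
  simp

lemma pd_add {d : ℕ} {f g : (Fin d → ℝ) → ℝ} {i : Fin d} {θ : Fin d → ℝ}
    (hf : DifferentiableAt ℝ f θ) (hg : DifferentiableAt ℝ g θ) :
    pd (fun θ' => f θ' + g θ') i θ = pd f i θ + pd g i θ := by
  unfold pd
  rw [fderiv_fun_add hf hg]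
  simp

lemma pd_log {d : ℕ} {f : (Fin d → ℝ) → ℝ} {i : Fin d} {θ : Fin d → ℝ}
    (hf : DifferentiableAt ℝ f θ) (h0 : f θ ≠ 0) :
    pd (fun θ' => Real.log (f θ')) i θ = (f θ)⁻¹ * pd f i θ := by
  unfold pd
  rw [(((hf.hasFDerivAt).log h0)).fderiv]
  simp

/-! ### Combinatorial lemmas for sums over paths -/

lemma sum_snoc_split {X : Type*} [Fintype X] (n : ℕ) (f : (Fin (n + 1) → X) → ℝ) :
    ∑ xs : Fin (n + 1) → X, f xs
      = ∑ z : X, ∑ ys : Fin n → X, f (Fin.snoc (α := fun _ => X) ys z) := by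
  trans (∑ p : X × (Fin n → X), f (Fin.snoc (α := fun _ => X) p.2 p.1))
  · exact (Fintype.sum_equiv (Fin.snocEquiv (fun _ => X)) _ _ (fun p => rfl)).symm
  · exact Fintype.sum_prod_type _

lemma snoc_prod {X : Type*} (n : ℕ) (g : X → X → ℝ) (ys : Fin (n + 1) → X) (z : X) :
    (∏ t : Fin (n + 1), g (Fin.snoc (α := fun _ => X) ys z t.castSucc)
        (Fin.snoc (α := fun _ => X) ys z t.succ))
      = (∏ t : Fin n, g (ys t.castSucc) (ys t.succ)) * g (ys (Fin.last n)) z := by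
  rw [Fin.prod_univ_castSucc]
  congr 1
  · apply Finset.prod_congr rfl
    intro t _
    rw [Fin.succ_castSucc, Fin.snoc_castSucc, Fin.snoc_castSucc]
  · rw [Fin.succ_last, Fin.snoc_castSucc, Fin.snoc_last]

lemma snoc_sum {X : Type*} (n : ℕ) (g : X → X → ℝ) (ys : Fin (n + 1) → X) (z : X) :
    (∑ t : Fin (n + 1), g (Fin.snoc (α := fun _ => X) ys z t.castSucc)
        (Fin.snoc (α := fun _ => X) ys z t.succ))
      = (∑ t : Fin n, g (ys t.castSucc) (ys t.succ)) + g (ys (Fin.last n)) z := by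
  rw [Fin.sum_univ_castSucc]
  congr 1
  · apply Finset.sum_congr rfl
    intro t _
    rw [Fin.succ_castSucc, Fin.snoc_castSucc, Fin.snoc_castSucc]
  · rw [Fin.succ_last, Fin.snoc_castSucc, Fin.snoc_last]

lemma snoc_zero' {X : Type*} (n : ℕ) (ys : Fin (n + 1) → X) (z : X) :
    Fin.snoc (α := fun _ => X) ys z 0 = ys 0 := by
  have : (0 : Fin (n + 2)) = Fin.castSucc 0 := rfl
  rw [this, Fin.snoc_castSucc]

lemma sum_fin_one {X : Type*} [Fintype X] (f : (Fin 1 → X) → ℝ) :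
    ∑ xs : Fin 1 → X, f xs = ∑ x : X, f (fun _ => x) := by
  apply Fintype.sum_equiv (Equiv.funUnique (Fin 1) X)
  intro xs
  exact congrArg f (funext fun t => by rw [Subsingleton.elim t 0]; rfl)

/-! ### Uniqueness of the stationary distribution -/

lemma stationary_unique {X : Type*} [Fintype X] [DecidableEq X]
    (E : Finset (X × X)) (hconn : StronglyConnected E)
    (w : X → X → ℝ) (hw0 : ∀ x y, 0 ≤ w x y) (hwE : ∀ x y, (0 < w x y ↔ (x, y) ∈ E))
    (p : X → ℝ) (hp0 : ∀ x, 0 < p x) (hp1 : ∑ x, p x = 1)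
    (hps : ∀ y, ∑ x, p x * w x y = p y)
    (v : X → ℝ) (hv0 : ∀ x, 0 ≤ v x) (hv1 : ∑ x, v x = 1)
    (hvs : ∀ y, ∑ x, v x * w x y = v y) : v = p := by
  have hne : Nonempty X := by
    by_contra h
    rw [not_nonempty_iff] at h
    simp at hv1
  obtain ⟨x0, -, hx0⟩ := Finset.exists_min_image Finset.univ (fun x => v x / p x)
    Finset.univ_nonempty
  set c := v x0 / p x0 with hc
  set h : X → ℝ := fun x => v x - c * p x with hh
  have hnn : ∀ x, 0 ≤ h x := by
    intro x
    have := hx0 x (Finset.mem_univ x)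
    have hpx := hp0 x
    simp only [hh]
    rw [sub_nonneg]
    calc c * p x ≤ (v x / p x) * p x := by
          apply mul_le_mul_of_nonneg_right this hpx.le
      _ = v x := div_mul_cancel₀ _ hpx.ne'
  have hx00 : h x0 = 0 := by
    simp only [hh, hc]
    rw [div_mul_cancel₀ _ (hp0 x0).ne']
    ring
  have hstat : ∀ y, ∑ x, h x * w x y = h y := by
    intro y
    simp only [hh, sub_mul, Finset.sum_sub_distrib, mul_assoc, ← Finset.mul_sum]
    rw [hvs y, hps y]
  have hback : ∀ y, h y = 0 → ∀ x, (x, y) ∈ E → h x = 0 := by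
    intro y hy x hxy
    have hsum : ∑ z, h z * w z y = 0 := by rw [hstat y, hy]
    have hterm : h x * w x y = 0 := by
      exact (Finset.sum_eq_zero_iff_of_nonneg (fun z _ =>
        mul_nonneg (hnn z) (hw0 z y))).mp hsum x (Finset.mem_univ x)
    have hw : 0 < w x y := (hwE x y).mpr hxy
    rcases mul_eq_zero.mp hterm with h' | h'
    · exact h'
    · exact absurd h' hw.ne'
  have hzero : ∀ z, h z = 0 := by
    intro z
    have ht : Relation.TransGen (fun a b => (a, b) ∈ E) z x0 := hconn z x0
    induction ht using Relation.TransGen.head_induction_on with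
    | single hab => exact hback x0 hx00 _ hab
    | head hab _ ihc => exact hback _ ihc _ hab
  have hcone : c = 1 := by
    have : ∑ x, h x = 0 := Finset.sum_eq_zero (fun x _ => hzero x)
    simp only [hh, Finset.sum_sub_distrib, ← Finset.mul_sum, hv1, hp1] at this
    linarith
  funext x
  have := hzero x
  simp only [hh, hcone, one_mul] at this
  linarith

/-! ### Cesàro convergence of the marginals to the stationary distribution -/

lemma cesaro_stationary {X : Type*} [Fintype X] [DecidableEq X]
    (E : Finset (X × X)) (hconn : StronglyConnected E)
    (w : X → X → ℝ) (hw0 : ∀ x y, 0 ≤ w x y) (hwE : ∀ x y, (0 < w x y ↔ (x, y) ∈ E))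
    (p : X → ℝ) (hp0 : ∀ x, 0 < p x) (hp1 : ∑ x, p x = 1)
    (hps : ∀ y, ∑ x, p x * w x y = p y)
    (μ : ℕ → X → ℝ) (hμ0 : ∀ n x, 0 ≤ μ n x) (hμ1 : ∀ n, ∑ x, μ n x = 1)
    (hrec : ∀ n y, ∑ x, μ n x * w x y = μ (n + 1) y)
    (F : X → ℝ) :
    Tendsto (fun n : ℕ => (∑ t ∈ Finset.range n, ∑ x, μ t x * F x) / n)
      atTop (nhds (∑ x, p x * F x)) := by
  set ν : ℕ → X → ℝ := fun n x => (∑ t ∈ Finset.range n, μ t x) / n with hν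
  have hμub : ∀ n x, μ n x ≤ 1 := by
    intro n x
    calc μ n x ≤ ∑ y, μ n y :=
          Finset.single_le_sum (fun y _ => hμ0 n y) (Finset.mem_univ x)
      _ = 1 := hμ1 n
  have hmem : ∀ n, ν n ∈ Set.pi Set.univ (fun _ : X => Set.Icc (0:ℝ) 1) := by
    intro n x _
    rcases Nat.eq_zero_or_pos n with rfl | hn
    · simp [hν]
    constructor
    · apply div_nonneg (Finset.sum_nonneg fun t _ => hμ0 t x) (by positivity)
    · rw [div_le_one (by exact_mod_cast hn)]
      calc ∑ t ∈ Finset.range n, μ t x ≤ ∑ t ∈ Finset.range n, 1 :=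
            Finset.sum_le_sum (fun t _ => hμub t x)
        _ = n := by simp
  have hK : IsCompact (Set.pi Set.univ (fun _ : X => Set.Icc (0:ℝ) 1)) :=
    isCompact_univ_pi (fun _ => isCompact_Icc)
  have hkey : ∀ n, (∑ t ∈ Finset.range n, ∑ x, μ t x * F x) / n = ∑ x, ν n x * F x := by
    intro n
    rw [Finset.sum_comm, Finset.sum_div]
    apply Finset.sum_congr rfl
    intro x _
    rw [← Finset.sum_mul, hν, div_mul_eq_mul_div]
  simp only [hkey]
  apply tendsto_of_subseq_tendsto
  intro ns hns
  obtain ⟨v, hvK, φ, hφ, hconv⟩ := hK.tendsto_subseq (fun k => hmem (ns k))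
  refine ⟨φ, ?_⟩
  have hm : Tendsto (fun k => ns (φ k)) atTop atTop := hns.comp hφ.tendsto_atTop
  have hconvpt : ∀ x, Tendsto (fun k => ν (ns (φ k)) x) atTop (nhds (v x)) := by
    intro x
    exact (tendsto_pi_nhds.mp hconv) x
  have hv0 : ∀ x, 0 ≤ v x := fun x => (hvK x (Set.mem_univ x)).1
  have hνsum : ∀ n : ℕ, 1 ≤ n → ∑ x, ν n x = 1 := by
    intro n hn
    simp only [hν, ← Finset.sum_div]
    rw [Finset.sum_comm]
    simp only [hμ1, Finset.sum_const, Finset.card_range, nsmul_eq_mul, mul_one]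
    exact div_self (by exact_mod_cast Nat.one_le_iff_ne_zero.mp hn)
  have hv1 : ∑ x, v x = 1 := by
    have h1 : Tendsto (fun k => ∑ x, ν (ns (φ k)) x) atTop (nhds (∑ x, v x)) :=
      tendsto_finset_sum _ (fun x _ => hconvpt x)
    have h2 : (fun k => ∑ x, ν (ns (φ k)) x) =ᶠ[atTop] fun _ => 1 := by
      filter_upwards [hm.eventually_ge_atTop 1] with k hk
      exact hνsum _ hk
    exact tendsto_nhds_unique (h1.congr' h2) tendsto_const_nhds
  have hvstat : ∀ y, ∑ x, v x * w x y = v y := by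
    intro y
    have hcalc : ∀ n : ℕ, 1 ≤ n →
        ∑ x, ν n x * w x y = ν n y + (μ n y - μ 0 y) / n := by
      intro n hn
      have e1 : ∑ x, ν n x * w x y = (∑ t ∈ Finset.range n, μ (t + 1) y) / n := by
        simp only [hν, div_mul_eq_mul_div, ← Finset.sum_div]
        congr 1
        simp only [Finset.sum_mul]
        rw [Finset.sum_comm]
        exact Finset.sum_congr rfl (fun t _ => hrec t y)
      rw [e1, hν]
      rw [← add_div]
      congr 1
      have h1 := Finset.sum_range_succ' (fun t => μ t y) n
      have h2 := Finset.sum_range_succ (fun t => μ t y) n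
      linarith
    have h1 : Tendsto (fun k => ∑ x, ν (ns (φ k)) x * w x y) atTop
        (nhds (∑ x, v x * w x y)) := by
      apply tendsto_finset_sum
      intro x _
      exact (hconvpt x).mul_const _
    have h2 : Tendsto (fun k => ν (ns (φ k)) y + (μ (ns (φ k)) y - μ 0 y) / (ns (φ k)))
        atTop (nhds (v y + 0)) := by
      apply (hconvpt y).add
      apply squeeze_zero_norm (a := fun k => 2 / (ns (φ k) : ℝ)) ?_ ?_
      · intro k
        rcases Nat.eq_zero_or_pos (ns (φ k)) with h0 | hpos
        · simp [h0]
        · rw [Real.norm_eq_abs, abs_div, abs_of_nonneg (by positivity : (0:ℝ) ≤ (ns (φ k) : ℝ))]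
          have hm2 : (0:ℝ) < (ns (φ k) : ℝ) := by exact_mod_cast hpos
          rw [div_le_div_iff_of_pos_right hm2]
          have a1 := hμ0 (ns (φ k)) y
          have a2 := hμub (ns (φ k)) y
          have a3 := hμ0 0 y
          have a4 := hμub 0 y
          rw [abs_le]
          constructor <;> linarith
      · exact Tendsto.div_atTop tendsto_const_nhds (tendsto_natCast_atTop_atTop.comp hm)
    have h3 : (fun k => ∑ x, ν (ns (φ k)) x * w x y) =ᶠ[atTop]
        (fun k => ν (ns (φ k)) y + (μ (ns (φ k)) y - μ 0 y) / (ns (φ k))) := by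
      filter_upwards [hm.eventually_ge_atTop 1] with k hk
      exact hcalc _ hk
    have := tendsto_nhds_unique (h1.congr' h3) h2
    rw [add_zero] at this
    exact this
  have hvp : v = p := stationary_unique E hconn w hw0 hwE p hp0 hp1 hps v hv0 hv1 hvstat
  rw [← hvp]
  exact tendsto_finset_sum _ (fun x _ => (hconvpt x).mul_const _)

/-! ### The score functions, path measure and Fisher information along paths -/

section Aux

variable {X : Type*} [Fintype X] [DecidableEq X] {d : ℕ}
  (w : (Fin d → ℝ) → X → X → ℝ) (q : (Fin d → ℝ) → X → ℝ) (θ : Fin d → ℝ)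

noncomputable def auxL (k : Fin d) (x y : X) : ℝ :=
  pd (fun θ' => Real.log (w θ' x y)) k θ

noncomputable def auxA (k : Fin d) (x : X) : ℝ :=
  pd (fun θ' => Real.log (q θ' x)) k θ

noncomputable def auxQ (n : ℕ) (xs : Fin (n + 1) → X) : ℝ :=
  q θ (xs 0) * ∏ t : Fin n, w θ (xs t.castSucc) (xs t.succ)

noncomputable def auxS (k : Fin d) (n : ℕ) (xs : Fin (n + 1) → X) : ℝ :=
  auxA q θ k (xs 0) + ∑ t : Fin n, auxL w θ k (xs t.castSucc) (xs t.succ)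

noncomputable def auxμ (n : ℕ) (x : X) : ℝ :=
  ∑ xs : Fin (n + 1) → X, if xs (Fin.last n) = x then auxQ w q θ n xs else 0

noncomputable def auxF (i j : Fin d) (x : X) : ℝ :=
  ∑ y, w θ x y * auxL w θ i x y * auxL w θ j x y

noncomputable def auxG (i j : Fin d) (n : ℕ) : ℝ :=
  ∑ xs : Fin (n + 1) → X, auxQ w q θ n xs * auxS w q θ i n xs * auxS w q θ j n xs

lemma auxμ_zero (x : X) : auxμ w q θ 0 x = q θ x := by
  unfold auxμ auxQ
  rw [sum_fin_one (fun xs => if xs (Fin.last 0) = x then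
    q θ (xs 0) * ∏ t : Fin 0, w θ (xs t.castSucc) (xs t.succ) else 0)]
  simp [Finset.sum_ite_eq']

lemma auxμ_rec (n : ℕ) (y : X) :
    auxμ w q θ (n + 1) y = ∑ x, auxμ w q θ n x * w θ x y := by
  unfold auxμ
  trans (∑ ys : Fin (n + 1) → X, auxQ w q θ n ys * w θ (ys (Fin.last n)) y)
  · rw [sum_snoc_split]
    rw [Finset.sum_comm]
    apply Finset.sum_congr rfl
    intro ys _
    have hq : ∀ z : X, auxQ w q θ (n + 1) (Fin.snoc (α := fun _ => X) ys z)
        = auxQ w q θ n ys * w θ (ys (Fin.last n)) z := by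
      intro z
      unfold auxQ
      rw [snoc_prod, snoc_zero']
      ring
    simp only [hq, Fin.snoc_last]
    rw [Finset.sum_ite_eq' Finset.univ y
      (fun z => auxQ w q θ n ys * w θ (ys (Fin.last n)) z)]
    simp
  · symm
    calc ∑ x : X, (∑ xs : Fin (n + 1) → X,
            if xs (Fin.last n) = x then auxQ w q θ n xs else 0) * w θ x y
        = ∑ x : X, ∑ xs : Fin (n + 1) → X,
            (if xs (Fin.last n) = x then auxQ w q θ n xs * w θ x y else 0) := by
          simp only [Finset.sum_mul, ite_mul, zero_mul]
      _ = ∑ xs : Fin (n + 1) → X, ∑ x : X,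
            (if xs (Fin.last n) = x then auxQ w q θ n xs * w θ x y else 0) :=
          Finset.sum_comm
      _ = ∑ xs : Fin (n + 1) → X, auxQ w q θ n xs * w θ (xs (Fin.last n)) y := by
          apply Finset.sum_congr rfl
          intro xs _
          rw [Finset.sum_ite_eq Finset.univ (xs (Fin.last n))
            (fun x => auxQ w q θ n xs * w θ x y)]
          simp

lemma auxμ_nonneg (hq0 : ∀ x, 0 ≤ q θ x) (hw0 : ∀ x y, 0 ≤ w θ x y)
    (n : ℕ) (x : X) : 0 ≤ auxμ w q θ n x := by
  apply Finset.sum_nonneg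
  intro xs _
  split_ifs
  · exact mul_nonneg (hq0 _) (Finset.prod_nonneg fun t _ => hw0 _ _)
  · exact le_refl 0

lemma auxμ_sum (hq1 : ∑ x, q θ x = 1) (hw1 : ∀ x, ∑ y, w θ x y = 1)
    (n : ℕ) : ∑ x, auxμ w q θ n x = 1 := by
  induction n with
  | zero => simp only [auxμ_zero]; exact hq1
  | succ n ih =>
    simp only [auxμ_rec]
    rw [Finset.sum_comm]
    calc ∑ x, ∑ y, auxμ w q θ n x * w θ x y
          = ∑ x, auxμ w q θ n x * ∑ y, w θ x y := by
            apply Finset.sum_congr rfl; intro x _; rw [Finset.mul_sum]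
      _ = 1 := by simp only [hw1, mul_one]; exact ih

lemma auxG_rec (i j : Fin d)
    (hw1 : ∀ x, ∑ y, w θ x y = 1)
    (hZ : ∀ k x, ∑ y, w θ x y * auxL w θ k x y = 0)
    (n : ℕ) :
    auxG w q θ i j (n + 1) = auxG w q θ i j n + ∑ x, auxμ w q θ n x * auxF w θ i j x := by
  unfold auxG
  rw [sum_snoc_split, Finset.sum_comm]
  have hterm : ∀ (ys : Fin (n + 1) → X) (z : X),
      auxQ w q θ (n + 1) (Fin.snoc (α := fun _ => X) ys z)
          * auxS w q θ i (n + 1) (Fin.snoc (α := fun _ => X) ys z)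
          * auxS w q θ j (n + 1) (Fin.snoc (α := fun _ => X) ys z)
        = (auxQ w q θ n ys * w θ (ys (Fin.last n)) z)
          * (auxS w q θ i n ys + auxL w θ i (ys (Fin.last n)) z)
          * (auxS w q θ j n ys + auxL w θ j (ys (Fin.last n)) z) := by
    intro ys z
    unfold auxQ auxS
    rw [snoc_prod, snoc_sum, snoc_sum, snoc_zero']
    ring
  have hinner : ∀ ys : Fin (n + 1) → X,
      (∑ z, (auxQ w q θ n ys * w θ (ys (Fin.last n)) z)
          * (auxS w q θ i n ys + auxL w θ i (ys (Fin.last n)) z)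
          * (auxS w q θ j n ys + auxL w θ j (ys (Fin.last n)) z))
        = auxQ w q θ n ys * auxS w q θ i n ys * auxS w q θ j n ys
          + auxQ w q θ n ys * auxF w θ i j (ys (Fin.last n)) := by
    intro ys
    set x' := ys (Fin.last n)
    set c := auxQ w q θ n ys
    set a := auxS w q θ i n ys
    set b := auxS w q θ j n ys
    trans (∑ z, ((c * a * b) * w θ x' z
      + ((c * a) * (w θ x' z * auxL w θ j x' z)
      + ((c * b) * (w θ x' z * auxL w θ i x' z)
      + c * (w θ x' z * auxL w θ i x' z * auxL w θ j x' z)))))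
    · apply Finset.sum_congr rfl; intro z _; ring
    rw [Finset.sum_add_distrib, Finset.sum_add_distrib, Finset.sum_add_distrib,
      ← Finset.mul_sum, ← Finset.mul_sum, ← Finset.mul_sum, ← Finset.mul_sum,
      hw1, hZ, hZ]
    unfold auxF
    ring
  calc ∑ ys : Fin (n + 1) → X, ∑ z : X,
        auxQ w q θ (n + 1) (Fin.snoc (α := fun _ => X) ys z)
          * auxS w q θ i (n + 1) (Fin.snoc (α := fun _ => X) ys z)
          * auxS w q θ j (n + 1) (Fin.snoc (α := fun _ => X) ys z)
      = ∑ ys : Fin (n + 1) → X,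
          (auxQ w q θ n ys * auxS w q θ i n ys * auxS w q θ j n ys
            + auxQ w q θ n ys * auxF w θ i j (ys (Fin.last n))) := by
        apply Finset.sum_congr rfl
        intro ys _
        rw [Finset.sum_congr rfl (fun z _ => hterm ys z), hinner ys]
    _ = (∑ ys : Fin (n + 1) → X, auxQ w q θ n ys * auxS w q θ i n ys * auxS w q θ j n ys)
        + ∑ ys : Fin (n + 1) → X, auxQ w q θ n ys * auxF w θ i j (ys (Fin.last n)) := by
        rw [Finset.sum_add_distrib]
    _ = _ := by
        congr 1
        unfold auxμ
        symm
        calc ∑ x : X, (∑ xs : Fin (n + 1) → X,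
                if xs (Fin.last n) = x then auxQ w q θ n xs else 0) * auxF w θ i j x
            = ∑ x : X, ∑ xs : Fin (n + 1) → X,
                (if xs (Fin.last n) = x then auxQ w q θ n xs * auxF w θ i j x else 0) := by
              simp only [Finset.sum_mul, ite_mul, zero_mul]
          _ = ∑ xs : Fin (n + 1) → X, ∑ x : X,
                (if xs (Fin.last n) = x then auxQ w q θ n xs * auxF w θ i j x else 0) :=
              Finset.sum_comm
          _ = ∑ xs : Fin (n + 1) → X, auxQ w q θ n xs * auxF w θ i j (xs (Fin.last n)) := by
              apply Finset.sum_congr rfl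
              intro xs _
              rw [Finset.sum_ite_eq Finset.univ (xs (Fin.last n))
                (fun x => auxQ w q θ n xs * auxF w θ i j x)]
              simp

end Aux

/-- Fisher information rate. Let `{w_θ : θ ∈ Θ} ⊆ W(X,E)` with
`w_θ(y|x)` continuously differentiable in `θ` on the open set `Θ`, and let `q_θ` be
strictly positive initial distributions, continuously differentiable in `θ`.  With
`q_θ⁽ⁿ⁾(x₁,…,xₙ) = q_θ(x₁) Π_t w_θ(x_{t+1}|x_t)` (a path with `n+1` points is
indexed by `Fin (n+1) → X`) and
`g_ij⁽ⁿ⁾(θ) = Σ_{paths} q_θ⁽ⁿ⁾ (∂_i log q_θ⁽ⁿ⁾)(∂_j log q_θ⁽ⁿ⁾)`,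
the normalized Fisher informations `(1/n) g_ij⁽ⁿ⁾(θ)` converge to
`g_ij(θ) = Σ_{(x,y)∈E} p_{w_θ}(x) w_θ(y|x)(∂_i log w_θ(y|x))(∂_j log w_θ(y|x))`. -/
theorem fisher_information_rate_limit
    {X : Type*} [Fintype X] [DecidableEq X] {d : ℕ}
    (hX : 2 ≤ Fintype.card X)
    (E : Finset (X × X)) (hconn : StronglyConnected E)
    (Θ : Set (Fin d → ℝ)) (hΘ : IsOpen Θ)
    (w : (Fin d → ℝ) → X → X → ℝ) (hker : ∀ θ ∈ Θ, IsMarkovKernel E (w θ))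
    (hwC : ∀ x y, (x, y) ∈ E → ContDiffOn ℝ 1 (fun θ => w θ x y) Θ)
    (q : (Fin d → ℝ) → X → ℝ)
    (hq : ∀ θ ∈ Θ, (∀ x, 0 < q θ x) ∧ ∑ x, q θ x = 1)
    (hqC : ∀ x, ContDiffOn ℝ 1 (fun θ => q θ x) Θ)
    (θ : Fin d → ℝ) (hθ : θ ∈ Θ)
    (p : X → ℝ) (hp : IsStationaryDist (w θ) p)
    (i j : Fin d) :
    Filter.Tendsto (fun n : ℕ =>
      (∑ xs : Fin (n + 1) → X,
        if ∀ t : Fin n, (xs t.castSucc, xs t.succ) ∈ E then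
          (q θ (xs 0) * ∏ t : Fin n, w θ (xs t.castSucc) (xs t.succ)) *
            pd (fun θ' => Real.log
              (q θ' (xs 0) * ∏ t : Fin n, w θ' (xs t.castSucc) (xs t.succ))) i θ *
            pd (fun θ' => Real.log
              (q θ' (xs 0) * ∏ t : Fin n, w θ' (xs t.castSucc) (xs t.succ))) j θ
        else 0) / (n + 1 : ℝ))
      Filter.atTop
      (nhds (∑ e ∈ E, p e.1 * w θ e.1 e.2 *
        pd (fun θ' => Real.log (w θ' e.1 e.2)) i θ *
        pd (fun θ' => Real.log (w θ' e.1 e.2)) j θ)) := by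
  obtain ⟨hw0, hw1, hwE⟩ := hker θ hθ
  obtain ⟨hq0, hq1⟩ := hq θ hθ
  obtain ⟨hp0, hp1, hps⟩ := hp
  have hΘn : Θ ∈ nhds θ := hΘ.mem_nhds hθ
  -- vanishing of the kernel off edges
  have hwzero : ∀ θ' ∈ Θ, ∀ x y, (x, y) ∉ E → w θ' x y = 0 := by
    intro θ' hθ' x y hne
    rcases ((hker θ' hθ').1 x y).lt_or_eq with hlt | heq
    · exact absurd (((hker θ' hθ').2.2 x y).mp hlt) hne
    · exact heq.symm
  -- differentiability of the kernel entries
  have hdiffw : ∀ x y, DifferentiableAt ℝ (fun θ' => w θ' x y) θ := by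
    intro x y
    by_cases he : (x, y) ∈ E
    · exact ((hwC x y he).differentiableOn one_ne_zero).differentiableAt hΘn
    · have heq : (fun θ' => w θ' x y) =ᶠ[nhds θ] (fun _ => 0) :=
        Filter.eventuallyEq_of_mem hΘn (fun θ' hθ' => hwzero θ' hθ' x y he)
      exact (differentiableAt_const (0:ℝ)).congr_of_eventuallyEq heq
  have hdiffq : ∀ x, DifferentiableAt ℝ (fun θ' => q θ' x) θ :=
    fun x => ((hqC x).differentiableOn one_ne_zero).differentiableAt hΘn
  have hpdw0 : ∀ (k : Fin d) x y, (x, y) ∉ E → pd (fun θ' => w θ' x y) k θ = 0 := by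
    intro k x y he
    have heq : (fun θ' => w θ' x y) =ᶠ[nhds θ] (fun _ => 0) :=
      Filter.eventuallyEq_of_mem hΘn (fun θ' hθ' => hwzero θ' hθ' x y he)
    rw [pd_congr heq, pd_const]
  -- zero-mean property of the score of a single transition
  have hZ : ∀ (k : Fin d) x, ∑ y, w θ x y * auxL w θ k x y = 0 := by
    intro k x
    have hterm : ∀ y, w θ x y * auxL w θ k x y = pd (fun θ' => w θ' x y) k θ := by
      intro y
      by_cases he : (x, y) ∈ E
      · have hpos := (hwE x y).mpr he
        unfold auxL
        rw [pd_log (hdiffw x y) hpos.ne']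
        field_simp
      · rw [hwzero θ hθ x y he, zero_mul, hpdw0 k x y he]
    rw [Finset.sum_congr rfl (fun y _ => hterm y)]
    rw [← pd_sum Finset.univ (fun y θ' => w θ' x y) k θ (fun y _ => hdiffw x y)]
    have heq1 : (fun θ' => ∑ y, w θ' x y) =ᶠ[nhds θ] (fun _ => (1:ℝ)) :=
      Filter.eventuallyEq_of_mem hΘn (fun θ' hθ' => (hker θ' hθ').2.1 x)
    rw [pd_congr heq1, pd_const]
  -- the summand in the statement agrees with `auxG`
  have hmatch : ∀ n : ℕ,
      (∑ xs : Fin (n + 1) → X,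
        if ∀ t : Fin n, (xs t.castSucc, xs t.succ) ∈ E then
          (q θ (xs 0) * ∏ t : Fin n, w θ (xs t.castSucc) (xs t.succ)) *
            pd (fun θ' => Real.log
              (q θ' (xs 0) * ∏ t : Fin n, w θ' (xs t.castSucc) (xs t.succ))) i θ *
            pd (fun θ' => Real.log
              (q θ' (xs 0) * ∏ t : Fin n, w θ' (xs t.castSucc) (xs t.succ))) j θ
        else 0) = auxG w q θ i j n := by
    intro n
    unfold auxG
    apply Finset.sum_congr rfl
    intro xs _
    by_cases hE : ∀ t : Fin n, (xs t.castSucc, xs t.succ) ∈ E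
    · rw [if_pos hE]
      have hpd : ∀ k : Fin d,
          pd (fun θ' => Real.log
            (q θ' (xs 0) * ∏ t : Fin n, w θ' (xs t.castSucc) (xs t.succ))) k θ
            = auxS w q θ k n xs := by
        intro k
        have heq : (fun θ' => Real.log
              (q θ' (xs 0) * ∏ t : Fin n, w θ' (xs t.castSucc) (xs t.succ)))
            =ᶠ[nhds θ] (fun θ' => Real.log (q θ' (xs 0))
              + ∑ t : Fin n, Real.log (w θ' (xs t.castSucc) (xs t.succ))) := by
          apply Filter.eventuallyEq_of_mem hΘn
          intro θ' hθ'
          have hqpos := (hq θ' hθ').1 (xs 0)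
          have hwpos : ∀ t : Fin n, 0 < w θ' (xs t.castSucc) (xs t.succ) :=
            fun t => ((hker θ' hθ').2.2 _ _).mpr (hE t)
          dsimp only
          rw [Real.log_mul hqpos.ne'
            (Finset.prod_ne_zero_iff.mpr (fun t _ => (hwpos t).ne'))]
          rw [Real.log_prod (fun t _ => (hwpos t).ne')]
        rw [pd_congr heq]
        have hd1 : DifferentiableAt ℝ (fun θ' => Real.log (q θ' (xs 0))) θ :=
          (hdiffq (xs 0)).log (hq0 (xs 0)).ne'
        have hd2 : ∀ t : Fin n,
            DifferentiableAt ℝ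
              (fun θ' => Real.log (w θ' (xs t.castSucc) (xs t.succ))) θ :=
          fun t => (hdiffw _ _).log (((hwE _ _).mpr (hE t))).ne'
        rw [pd_add hd1 (DifferentiableAt.fun_sum (fun t _ => hd2 t))]
        rw [pd_sum Finset.univ
          (fun t θ' => Real.log (w θ' (xs t.castSucc) (xs t.succ))) k θ
          (fun t _ => hd2 t)]
        rfl
      rw [hpd i, hpd j]
      rfl
    · rw [if_neg hE]
      push_neg at hE
      obtain ⟨t, ht⟩ := hE
      have hQ0 : auxQ w q θ n xs = 0 := by
        unfold auxQ
        rw [Finset.prod_eq_zero (Finset.mem_univ t) (hwzero θ hθ _ _ ht)]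
        ring
      rw [hQ0]
      ring
  -- the limit value equals `∑ x, p x * auxF x`
  have htarget : (∑ e ∈ E, p e.1 * w θ e.1 e.2 *
        pd (fun θ' => Real.log (w θ' e.1 e.2)) i θ *
        pd (fun θ' => Real.log (w θ' e.1 e.2)) j θ)
      = ∑ x, p x * auxF w θ i j x := by
    symm
    calc ∑ x, p x * auxF w θ i j x
        = ∑ e : X × X, p e.1 * w θ e.1 e.2 * auxL w θ i e.1 e.2 * auxL w θ j e.1 e.2 := by
          rw [Fintype.sum_prod_type]
          apply Finset.sum_congr rfl
          intro x _
          unfold auxF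
          rw [Finset.mul_sum]
          apply Finset.sum_congr rfl
          intro y _
          ring
      _ = ∑ e ∈ E, p e.1 * w θ e.1 e.2 * auxL w θ i e.1 e.2 * auxL w θ j e.1 e.2 := by
          symm
          apply Finset.sum_subset (Finset.subset_univ E)
          intro e _ he
          have : w θ e.1 e.2 = 0 := hwzero θ hθ e.1 e.2 (by simpa using he)
          rw [this]
          ring
      _ = _ := by
          apply Finset.sum_congr rfl
          intro e _
          unfold auxL
          ring
  rw [htarget]
  -- Cesàro convergence
  have hces := cesaro_stationary E hconn (w θ) hw0 hwE p hp0 hp1 hps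
    (auxμ w q θ) (auxμ_nonneg w q θ (fun x => (hq0 x).le) hw0)
    (auxμ_sum w q θ hq1 hw1) (fun n y => (auxμ_rec w q θ n y).symm)
    (auxF w θ i j)
  -- decomposition of `auxG`
  have hGsum : ∀ n, auxG w q θ i j n
      = auxG w q θ i j 0 + ∑ t ∈ Finset.range n, ∑ x, auxμ w q θ t x * auxF w θ i j x := by
    intro n
    induction n with
    | zero => simp
    | succ n ih =>
      rw [auxG_rec w q θ i j hw1 hZ n, ih, Finset.sum_range_succ]
      ring
  -- final limit computation
  have hmain : Filter.Tendsto (fun n : ℕ => auxG w q θ i j n / (n + 1 : ℝ))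
      Filter.atTop (nhds (∑ x, p x * auxF w θ i j x)) := by
    have hd : Tendsto (fun n : ℕ => ((n : ℝ) + 1)) atTop atTop :=
      tendsto_atTop_add_const_right _ 1 tendsto_natCast_atTop_atTop
    have h1 : Tendsto (fun n : ℕ => auxG w q θ i j 0 / ((n:ℝ) + 1)) atTop (nhds 0) :=
      Tendsto.div_atTop tendsto_const_nhds hd
    have h2 : Tendsto (fun n : ℕ => (n : ℝ) / ((n:ℝ) + 1)) atTop (nhds 1) := by
      have he : ∀ n : ℕ, (n : ℝ) / ((n:ℝ) + 1) = 1 - 1 / ((n:ℝ) + 1) := by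
        intro n
        have hne : (n:ℝ) + 1 ≠ 0 := by positivity
        field_simp
        ring
      simp only [he]
      have hz : Tendsto (fun n : ℕ => (1:ℝ) - 1 / ((n:ℝ) + 1)) atTop (nhds (1 - 0)) :=
        tendsto_const_nhds.sub (Tendsto.div_atTop tendsto_const_nhds hd)
      simpa using hz
    have hcomb := h1.add (hces.mul h2)
    rw [zero_add, mul_one] at hcomb
    apply hcomb.congr'
    filter_upwards [eventually_ge_atTop 1] with n hn
    rw [hGsum n]
    have hne : (n:ℝ) ≠ 0 := Nat.cast_ne_zero.mpr (by omega)
    have hne1 : (n:ℝ) + 1 ≠ 0 := by positivity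
    field_simp
    all_goals ring
  apply hmain.congr
  intro n
  rw [hmatch n]
end
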